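/- Let p > 1, a ∈ ℝ, and let v be the positive blow-up solution of v'' = |v|^{p-1}v log^a(2+v²) with blow-up time T. Then log(v(t)²+2) ∼ −(4/(p−1)) log(T−t) as t → T. -/

import Mathlib

open Real Set Filter

noncomputable def fn (p a : ℝ) (s : ℝ) : ℝ := |s| ^ (p-1) * s * (Real.log (2 + s^2)) ^ a
noncomputable def Fi (p a A : ℝ) (x : ℝ) : ℝ := ∫ s in A..x, fn p a s

lemma log2s_pos (s : ℝ) : 0 < Real.log (2 + s^2) := by
  apply Real.log_pos; nlinarith [sq_nonneg s]

lemma cont_logpart (a : ℝ) : Continuous (fun s : ℝ => (Real.log (2 + s^2)) ^ a) := by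
  rw [continuous_iff_continuousAt]; intro x
  have hl : ContinuousAt (fun s : ℝ => Real.log (2+s^2)) x :=
    (Real.continuousAt_log (by nlinarith [sq_nonneg x])).comp (by fun_prop)
  exact hl.rpow_const (Or.inl (ne_of_gt (log2s_pos x)))

lemma fn_cont (p a : ℝ) (hp : 1 < p) : Continuous (fn p a) := by
  unfold fn
  have h1 : Continuous (fun s : ℝ => |s| ^ (p-1)) := by
    apply continuous_abs.rpow_const
    intro x; right; linarith
  exact (h1.mul continuous_id).mul (cont_logpart a)

lemma fn_pos (p a : ℝ) {s : ℝ} (hs : 0 < s) : 0 < fn p a s := by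
  unfold fn
  have := log2s_pos s
  positivity

lemma fn_eq (p a : ℝ) {s : ℝ} (hs : 0 < s) :
    fn p a s = s ^ p * (Real.log (2 + s^2)) ^ a := by
  unfold fn
  rw [abs_of_pos hs]
  congr 1
  nth_rewrite 2 [show s = s ^ (1:ℝ) by rw [Real.rpow_one]]
  rw [← Real.rpow_add hs]
  ring_nf

lemma logpow_le (b ε : ℝ) (hε : 0 < ε) :
    ∀ᶠ s in atTop, (Real.log (2 + s^2)) ^ b ≤ s ^ ε := by
  rcases le_or_gt b 0 with hb | hb
  · filter_upwards [eventually_ge_atTop (3:ℝ)] with s hs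
    have h1 : 1 ≤ Real.log (2 + s^2) := by
      rw [Real.le_log_iff_exp_le (by nlinarith)]
      nlinarith [Real.exp_one_lt_d9]
    calc Real.log (2+s^2) ^ b ≤ 1 := Real.rpow_le_one_of_one_le_of_nonpos h1 hb
    _ ≤ s ^ ε := Real.one_le_rpow (by linarith) (le_of_lt hε)
  · have hlo : (fun s : ℝ => Real.log s) =o[atTop] fun s => s ^ (ε/b) :=
      isLittleO_log_rpow_atTop (by positivity)
    have hev := (hlo.bound (c := (1/4 : ℝ)) (by norm_num))
    filter_upwards [hev, eventually_ge_atTop (3:ℝ),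
        Real.tendsto_log_atTop.eventually_ge_atTop (Real.log 3)] with s h4 hs hls
    have hbase : Real.log (2 + s^2) ≤ s ^ (ε/b) := by
      have h1 : Real.log (2 + s^2) ≤ Real.log (3 * s^2) := by
        apply Real.log_le_log (by nlinarith)
        nlinarith
      have h2 : Real.log (3 * s^2) = Real.log 3 + 2 * Real.log s := by
        rw [Real.log_mul (by norm_num) (by nlinarith), Real.log_pow]; push_cast; ring
      have h3 : ‖Real.log s‖ ≤ 1/4 * ‖s ^ (ε/b)‖ := h4
      have hsp : (0:ℝ) ≤ s ^ (ε/b) := Real.rpow_nonneg (by linarith) _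
      have hls' : 0 ≤ Real.log s := le_trans (Real.log_nonneg (by norm_num)) hls
      rw [Real.norm_eq_abs, Real.norm_eq_abs, abs_of_nonneg hls', abs_of_nonneg hsp] at h3
      calc Real.log (2+s^2) ≤ Real.log 3 + 2 * Real.log s := by rw [← h2]; exact h1
        _ ≤ 3 * Real.log s := by linarith
        _ ≤ s ^ (ε/b) := by linarith
    calc (Real.log (2+s^2)) ^ b ≤ (s ^ (ε/b)) ^ b :=
          Real.rpow_le_rpow (le_of_lt (log2s_pos s)) hbase (le_of_lt hb)
      _ = s ^ ε := by
            rw [← Real.rpow_mul (by linarith : (0:ℝ) ≤ s)]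
            congr 1; field_simp

lemma logpow_ge (b ε : ℝ) (hε : 0 < ε) :
    ∀ᶠ s in atTop, s ^ (-ε) ≤ (Real.log (2 + s^2)) ^ b := by
  filter_upwards [logpow_le (-b) ε hε, eventually_gt_atTop (0:ℝ)] with s h hs
  have h1 : (Real.log (2+s^2))^(-b) ≤ s ^ ε := h
  rw [Real.rpow_neg (le_of_lt (log2s_pos s))] at h1
  have h2' : (0:ℝ) < (Real.log (2+s^2) ^ b)⁻¹ := by
    have := Real.rpow_pos_of_pos (log2s_pos s) b; positivity
  rw [Real.rpow_neg (le_of_lt hs)]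
  calc (s ^ ε)⁻¹ ≤ ((Real.log (2+s^2) ^ b)⁻¹)⁻¹ := inv_anti₀ h2' h1
    _ = Real.log (2+s^2) ^ b := inv_inv _

lemma aux_low (C0 m q y F : ℝ) (hm : 0 ≤ m) (hy : 1 ≤ y)
    (h1 : C0 + q - m ≤ F) (hz : (1+|C0|+m)*y ≤ q) : y ≤ F := by
  nlinarith [neg_abs_le C0, mul_nonneg (abs_nonneg C0) (by linarith : (0:ℝ) ≤ y - 1),
    mul_nonneg hm (by linarith : (0:ℝ) ≤ y - 1)]

lemma aux_high (C0 c z w F : ℝ) (hw : 1 ≤ w) (h1 : F ≤ C0 + c*w) (hz : |C0| + c ≤ z) :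
    F ≤ z*w := by
  nlinarith [le_abs_self C0, mul_nonneg (sub_nonneg.2 hz) (by linarith : (0:ℝ) ≤ w),
    mul_nonneg (abs_nonneg C0) (by linarith : (0:ℝ) ≤ w - 1)]

lemma aux_div (u d e : ℝ) (hd : 0 < d) (he : 0 ≤ e) : (u - e)/d ≤ u/d := by
  exact (div_le_div_iff_of_pos_right hd).2 (by linarith)

lemma fn_bounds (p a ε : ℝ) (hε : 0 < ε) :
    ∀ᶠ s in atTop, s ^ (p - ε) ≤ fn p a s ∧ fn p a s ≤ s ^ (p + ε) := by
  filter_upwards [logpow_le a ε hε, logpow_ge a ε hε, eventually_gt_atTop (0:ℝ)] with s h1 h2 hs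
  rw [fn_eq p a hs]
  have hsp : (0:ℝ) < s ^ p := Real.rpow_pos_of_pos hs _
  constructor
  · calc s ^ (p - ε) = s ^ p * s ^ (-ε) := by rw [← Real.rpow_add hs]; ring_nf
      _ ≤ s ^ p * (Real.log (2+s^2)) ^ a := by
          exact mul_le_mul_of_nonneg_left h2 (le_of_lt hsp)
  · calc s ^ p * (Real.log (2+s^2)) ^ a ≤ s ^ p * s ^ ε :=
          mul_le_mul_of_nonneg_left h1 (le_of_lt hsp)
      _ = s ^ (p + ε) := by rw [← Real.rpow_add hs]

lemma Fi_bounds (p a A B ε : ℝ) (hp : 1 < p) (hA : 0 < A) (hε : 0 < ε) (hε1 : ε < 1) :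
    ∀ᶠ x in atTop,
      x ^ (p + 1 - 2*ε) ≤ B^2 + 2 * Fi p a A x ∧
      B^2 + 2 * Fi p a A x ≤ x ^ (p + 1 + 2*ε) := by
  have hc := fn_cont p a hp
  rcases eventually_atTop.1 (fn_bounds p a ε hε) with ⟨M0, hM0⟩
  set M : ℝ := max M0 (max A 1) with hM
  have hM1 : (1:ℝ) ≤ M := le_trans (le_max_right A 1) (le_max_right _ _)
  have hMA : A ≤ M := le_trans (le_max_left A 1) (le_max_right _ _)
  have hMpos : (0:ℝ) < M := lt_of_lt_of_le one_pos hM1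
  have hsplit : ∀ x, Fi p a A x = Fi p a A M + ∫ s in M..x, fn p a s := by
    intro x
    unfold Fi
    rw [← intervalIntegral.integral_add_adjacent_intervals
      (hc.intervalIntegrable A M) (hc.intervalIntegrable M x)]
  have hplow : (-1:ℝ) < p - ε := by linarith
  have hphigh : (-1:ℝ) < p + ε := by linarith
  have hintlow : ∀ x, M ≤ x → (x ^ (p+1-ε) - M ^ (p+1-ε)) / (p+1-ε) ≤ ∫ s in M..x, fn p a s := by
    intro x hx
    have e1 : ∫ s in M..x, s ^ (p - ε) = (x ^ (p+1-ε) - M ^ (p+1-ε)) / (p+1-ε) := by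
      rw [integral_rpow (Or.inl hplow)]
      ring_nf
    rw [← e1]
    apply intervalIntegral.integral_mono_on hx
    · apply ContinuousOn.intervalIntegrable
      apply ContinuousOn.rpow_const
      · fun_prop
      · intro s hs
        rw [uIcc_of_le hx] at hs
        left; exact ne_of_gt (lt_of_lt_of_le hMpos hs.1)
    · exact hc.intervalIntegrable _ _
    · intro s hs
      exact (hM0 s (le_trans (le_max_left _ _) hs.1)).1
  have hinthigh : ∀ x, M ≤ x → (∫ s in M..x, fn p a s) ≤ (x ^ (p+1+ε) - M ^ (p+1+ε)) / (p+1+ε) := by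
    intro x hx
    have e1 : ∫ s in M..x, s ^ (p + ε) = (x ^ (p+1+ε) - M ^ (p+1+ε)) / (p+1+ε) := by
      rw [integral_rpow (Or.inl hphigh)]
      ring_nf
    rw [← e1]
    apply intervalIntegral.integral_mono_on hx (hc.intervalIntegrable _ _)
    · apply ContinuousOn.intervalIntegrable
      apply ContinuousOn.rpow_const
      · fun_prop
      · intro s hs
        rw [uIcc_of_le hx] at hs
        left; exact ne_of_gt (lt_of_lt_of_le hMpos hs.1)
    · intro s hs
      exact (hM0 s (le_trans (le_max_left _ _) hs.1)).2
  set C0 : ℝ := B^2 + 2 * Fi p a A M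
  have hev1 : Tendsto (fun x : ℝ => x ^ ε) atTop atTop := tendsto_rpow_atTop hε
  filter_upwards [eventually_ge_atTop M, eventually_ge_atTop (1:ℝ),
      hev1.eventually_ge_atTop ((1 + |C0| + 2 * M ^ (p+1-ε) / (p+1-ε)) * (p+1-ε) / 2),
      hev1.eventually_ge_atTop (|C0| + 2 / (p+1+ε))] with x hxM hx1 hA1 hA2
  have hxpos : (0:ℝ) < x := lt_of_lt_of_le one_pos hx1
  have hlow := hintlow x hxM
  have hhigh := hinthigh x hxM
  have hFx : Fi p a A x = Fi p a A M + ∫ s in M..x, fn p a s := hsplit x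
  have key1 : x ^ (p+1-ε) = x ^ ε * x ^ (p+1-2*ε) := by
    rw [← Real.rpow_add hxpos]; ring_nf
  have key2 : x ^ (p+1+2*ε) = x ^ ε * x ^ (p+1+ε) := by
    rw [← Real.rpow_add hxpos]; ring_nf
  have hb1 : (1:ℝ) ≤ x ^ (p+1-2*ε) := Real.one_le_rpow hx1 (by linarith)
  have hb2 : (1:ℝ) ≤ x ^ (p+1+ε) := Real.one_le_rpow hx1 (by linarith)
  have hd1 : (0:ℝ) < p+1-ε := by linarith
  have hd2 : (0:ℝ) < p+1+ε := by linarith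
  have hm : (0:ℝ) ≤ 2 * M ^ (p+1-ε) / (p+1-ε) := by positivity
  constructor
  · have h1 : C0 + 2/(p+1-ε)*(x^ε * x^(p+1-2*ε)) - 2*M^(p+1-ε)/(p+1-ε)
        ≤ B^2 + 2 * Fi p a A x := by
      have h2 : 2*((x^ε * x^(p+1-2*ε) - M^(p+1-ε))/(p+1-ε)) ≤ 2*(∫ s in M..x, fn p a s) := by
        rw [← key1]; linarith
      have h3 : C0 + 2*((x^ε * x^(p+1-2*ε) - M^(p+1-ε))/(p+1-ε))
          = C0 + 2/(p+1-ε)*(x^ε * x^(p+1-2*ε)) - 2*M^(p+1-ε)/(p+1-ε) := by ring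
      rw [hFx]
      have h4 : C0 = B^2 + 2 * Fi p a A M := rfl
      linarith
    have hz : (1 + |C0| + 2 * M^(p+1-ε)/(p+1-ε)) * x^(p+1-2*ε)
        ≤ 2/(p+1-ε)*(x^ε * x^(p+1-2*ε)) := by
      have hz0 : (1 + |C0| + 2 * M^(p+1-ε)/(p+1-ε)) ≤ 2/(p+1-ε) * x^ε := by
        rw [div_mul_eq_mul_div, le_div_iff₀ hd1]; linarith
      have := mul_le_mul_of_nonneg_right hz0 (le_trans zero_le_one hb1)
      linarith [this, (by ring : 2/(p+1-ε) * x^ε * x^(p+1-2*ε) = 2/(p+1-ε)*(x^ε * x^(p+1-2*ε)))]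
    exact aux_low C0 _ _ _ _ hm hb1 h1 hz
  · have h1 : B^2 + 2 * Fi p a A x ≤ C0 + 2/(p+1+ε) * x^(p+1+ε) := by
      have hMe : (0:ℝ) ≤ M ^ (p+1+ε) := by positivity
      have h2 : (x^(p+1+ε) - M^(p+1+ε))/(p+1+ε) ≤ x^(p+1+ε) / (p+1+ε) :=
        aux_div _ _ _ hd2 hMe
      have h4 : C0 = B^2 + 2 * Fi p a A M := rfl
      have h5 : C0 + 2*(x^(p+1+ε)/(p+1+ε)) = C0 + 2/(p+1+ε)*x^(p+1+ε) := by ring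
      rw [hFx]
      linarith
    rw [key2]
    exact aux_high C0 _ _ _ _ hb2 h1 hA2

set_option linter.unusedSectionVars false in
lemma energy (p a A B T : ℝ) (hp : 1 < p)
    (v : ℝ → ℝ) (hv0 : v 0 = A) (hv0' : deriv v 0 = B)
    (hv : ∀ t ∈ Ico (0:ℝ) T, HasDerivAt v (deriv v t) t)
    (hv' : ∀ t ∈ Ico (0:ℝ) T, HasDerivAt (deriv v) (fn p a (v t)) t) :
    ∀ t ∈ Ico (0:ℝ) T, (deriv v t)^2 = B^2 + 2 * Fi p a A (v t) := by
  have hc := fn_cont p a hp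
  set E : ℝ → ℝ := fun t => (deriv v t)^2 - 2 * Fi p a A (v t) with hE
  have hEder : ∀ t ∈ Ico (0:ℝ) T, HasDerivAt E 0 t := by
    intro t ht
    have hF : HasDerivAt (Fi p a A) (fn p a (v t)) (v t) :=
      intervalIntegral.integral_hasDerivAt_right
        (hc.intervalIntegrable _ _)
        hc.aestronglyMeasurable.stronglyMeasurableAtFilter
        hc.continuousAt
    have h1 : HasDerivAt (fun t => (deriv v t)^2) (2 * fn p a (v t) * deriv v t) t := by
      have := ((hv' t ht).pow 2)
      exact this.congr_deriv (by push_cast; ring)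
    have h2 : HasDerivAt (fun t => Fi p a A (v t)) (fn p a (v t) * deriv v t) t :=
      hF.comp t (hv t ht)
    have := h1.sub (h2.const_mul 2)
    exact this.congr_deriv (by ring)
  intro t ht
  have key : E t = E 0 := by
    rcases eq_or_lt_of_le ht.1 with h0 | h0
    · rw [← h0]
    · have := constant_of_has_deriv_right_zero (f := E) (a := 0) (b := t)
        (fun x hx => ((hEder x ⟨hx.1, lt_of_le_of_lt hx.2 ht.2⟩).continuousAt).continuousWithinAt)
        (fun x hx => ((hEder x ⟨hx.1, lt_trans hx.2 ht.2⟩)).hasDerivWithinAt)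
      exact this t (right_mem_Icc.mpr (le_of_lt h0))
  have hE0 : E 0 = B^2 := by
    simp only [hE, hv0, hv0', Fi, intervalIntegral.integral_same]
    ring
  have : (deriv v t)^2 - 2 * Fi p a A (v t) = B^2 := by rw [← hE0]; exact key
  linarith

set_option linter.unusedSectionVars false in
lemma deriv_ge (p a B T : ℝ) (hB : 0 < B)
    (v : ℝ → ℝ) (hv0' : deriv v 0 = B)
    (hpos : ∀ t ∈ Ico (0:ℝ) T, 0 < v t)
    (hv' : ∀ t ∈ Ico (0:ℝ) T, HasDerivAt (deriv v) (fn p a (v t)) t) :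
    ∀ t ∈ Ico (0:ℝ) T, B ≤ deriv v t := by
  have hmono : StrictMonoOn (deriv v) (Ico (0:ℝ) T) := by
    apply strictMonoOn_of_deriv_pos (convex_Ico 0 T)
    · exact fun x hx => ((hv' x hx).continuousAt).continuousWithinAt
    · intro x hx
      rw [interior_Ico] at hx
      have hx' : x ∈ Ico (0:ℝ) T := ⟨le_of_lt hx.1, hx.2⟩
      rw [(hv' x hx').deriv]
      exact fn_pos p a (hpos x hx')
  intro t ht
  rcases eq_or_lt_of_le ht.1 with h0 | h0
  · rw [← h0, hv0']
  · rw [← hv0']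
    exact le_of_lt (hmono ⟨le_refl 0, lt_trans h0 ht.2⟩ ht h0)

section
variable (T t0 q : ℝ) (hq : 1 < q) (ht0 : t0 < T)
    (v : ℝ → ℝ)
    (hpos : ∀ t ∈ Ico t0 T, 0 < v t)
    (hv : ∀ t ∈ Ico t0 T, HasDerivAt v (deriv v t) t)
    (hblow : Tendsto v (nhdsWithin T (Iio T)) atTop)

set_option linter.unusedSectionVars false in
include hq hpos hv hblow ht0 in
lemma ode_low (hd : ∀ t ∈ Ico t0 T, v t ^ q ≤ deriv v t) :
    ∀ s ∈ Ico t0 T, (q-1)*(T-s) ≤ (v s) ^ (1-q) := by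
  set g : ℝ → ℝ := fun t => v t ^ (1-q) + (q-1)*t with hg
  have hder : ∀ t ∈ Ico t0 T,
      HasDerivAt g ((1-q) * v t ^ (-q) * deriv v t + (q-1)) t := by
    intro t ht
    have h1 : HasDerivAt (fun t => v t ^ (1-q))
        (deriv v t * (1-q) * v t ^ (1-q-1)) t :=
      (hv t ht).rpow_const (Or.inl (ne_of_gt (hpos t ht)))
    have h2 : deriv v t * (1-q) * v t ^ (1-q-1) = (1-q) * v t ^ (-q) * deriv v t := by
      rw [show (1-q-1 : ℝ) = -q by ring]; ring
    rw [h2] at h1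
    exact h1.add (((hasDerivAt_id t).const_mul (q-1)).congr_deriv (mul_one _))
  have hanti : AntitoneOn g (Ico t0 T) := by
    apply antitoneOn_of_deriv_nonpos (convex_Ico t0 T)
    · exact fun x hx => ((hder x hx).continuousAt).continuousWithinAt
    · intro x hx
      rw [interior_Ico] at hx
      exact ((hder x ⟨le_of_lt hx.1, hx.2⟩).differentiableAt).differentiableWithinAt
    · intro x hx
      rw [interior_Ico] at hx
      have hx' : x ∈ Ico t0 T := ⟨le_of_lt hx.1, hx.2⟩
      rw [(hder x hx').deriv]
      have hvx := hpos x hx'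
      have hkey : (1:ℝ) ≤ v x ^ (-q) * deriv v x := by
        have : v x ^ (-q) * v x ^ q ≤ v x ^ (-q) * deriv v x :=
          mul_le_mul_of_nonneg_left (hd x hx') (le_of_lt (Real.rpow_pos_of_pos hvx _))
        rwa [← Real.rpow_add hvx, neg_add_cancel, Real.rpow_zero] at this
      nlinarith
  intro s hs
  have hlim : Tendsto g (nhdsWithin T (Iio T)) (nhds (0 + (q-1)*T)) := by
    apply Tendsto.add
    · have h0 : Tendsto (fun x : ℝ => x ^ (-(q-1))) atTop (nhds 0) :=
        tendsto_rpow_neg_atTop (by linarith)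
      have := h0.comp hblow
      simpa [show -(q-1) = 1-q by ring, Function.comp_def] using this
    · exact Tendsto.const_mul _ (tendsto_nhdsWithin_of_tendsto_nhds tendsto_id) |>.congr (fun x => rfl)
  have hev : ∀ᶠ t in nhdsWithin T (Iio T), g t ≤ g s := by
    filter_upwards [Ioo_mem_nhdsLT_of_mem (show T ∈ Ioc s T from ⟨hs.2, le_refl T⟩)] with t ht
    exact hanti hs ⟨le_trans hs.1 (le_of_lt ht.1), ht.2⟩ (le_of_lt ht.1)
  have := le_of_tendsto hlim hev
  simp only [hg] at this
  linarith

set_option linter.unusedSectionVars false in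
include hq hpos hv hblow ht0 in
lemma ode_high (hd : ∀ t ∈ Ico t0 T, deriv v t ≤ v t ^ q) :
    ∀ s ∈ Ico t0 T, (v s) ^ (1-q) ≤ (q-1)*(T-s) := by
  set g : ℝ → ℝ := fun t => v t ^ (1-q) + (q-1)*t with hg
  have hder : ∀ t ∈ Ico t0 T,
      HasDerivAt g ((1-q) * v t ^ (-q) * deriv v t + (q-1)) t := by
    intro t ht
    have h1 : HasDerivAt (fun t => v t ^ (1-q))
        (deriv v t * (1-q) * v t ^ (1-q-1)) t :=
      (hv t ht).rpow_const (Or.inl (ne_of_gt (hpos t ht)))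
    have h2 : deriv v t * (1-q) * v t ^ (1-q-1) = (1-q) * v t ^ (-q) * deriv v t := by
      rw [show (1-q-1 : ℝ) = -q by ring]; ring
    rw [h2] at h1
    exact h1.add (((hasDerivAt_id t).const_mul (q-1)).congr_deriv (mul_one _))
  have hmono : MonotoneOn g (Ico t0 T) := by
    apply monotoneOn_of_deriv_nonneg (convex_Ico t0 T)
    · exact fun x hx => ((hder x hx).continuousAt).continuousWithinAt
    · intro x hx
      rw [interior_Ico] at hx
      exact ((hder x ⟨le_of_lt hx.1, hx.2⟩).differentiableAt).differentiableWithinAt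
    · intro x hx
      rw [interior_Ico] at hx
      have hx' : x ∈ Ico t0 T := ⟨le_of_lt hx.1, hx.2⟩
      rw [(hder x hx').deriv]
      have hvx := hpos x hx'
      have hkey : v x ^ (-q) * deriv v x ≤ 1 := by
        have : v x ^ (-q) * deriv v x ≤ v x ^ (-q) * v x ^ q :=
          mul_le_mul_of_nonneg_left (hd x hx') (le_of_lt (Real.rpow_pos_of_pos hvx _))
        rwa [← Real.rpow_add hvx, neg_add_cancel, Real.rpow_zero] at this
      nlinarith
  intro s hs
  have hlim : Tendsto g (nhdsWithin T (Iio T)) (nhds (0 + (q-1)*T)) := by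
    apply Tendsto.add
    · have h0 : Tendsto (fun x : ℝ => x ^ (-(q-1))) atTop (nhds 0) :=
        tendsto_rpow_neg_atTop (by linarith)
      have := h0.comp hblow
      simpa [show -(q-1) = 1-q by ring, Function.comp_def] using this
    · exact Tendsto.const_mul _ (tendsto_nhdsWithin_of_tendsto_nhds tendsto_id) |>.congr (fun x => rfl)
  have hev : ∀ᶠ t in nhdsWithin T (Iio T), g s ≤ g t := by
    filter_upwards [Ioo_mem_nhdsLT_of_mem (show T ∈ Ioc s T from ⟨hs.2, le_refl T⟩)] with t ht
    exact hmono hs ⟨le_trans hs.1 (le_of_lt ht.1), ht.2⟩ (le_of_lt ht.1)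
  have := ge_of_tendsto hlim hev
  simp only [hg] at this
  linarith
end

lemma tendsto_of_eventually_abs_le {α : Type*} {f : α → ℝ} {l : Filter α} {L : ℝ}
    (h : ∀ δ : ℝ, 0 < δ → ∀ᶠ t in l, |f t - L| ≤ δ) : Tendsto f l (nhds L) := by
  rw [Metric.tendsto_nhds]
  intro δ hδ
  filter_upwards [h (δ/2) (by linarith)] with t ht
  rw [Real.dist_eq]
  linarith

lemma ratio_upper (u y l d δc : ℝ) (hd : 0 < d) (hy : 0 < y) (hδ : 0 < δc)
    (hK : 4*|l| ≤ d*δc*y) (hu : u ≤ (y - l)/d) : u/y ≤ 1/d + δc/4 := by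
  have h0 : u/y ≤ ((y-l)/d)/y := (div_le_div_iff_of_pos_right hy).2 hu
  have h1 : ((y-l)/d)/y = 1/d - l/(d*y) := by field_simp
  have h2 : |l|/(d*y) ≤ δc/4 := by
    rw [div_le_iff₀ (by positivity)]; nlinarith
  have h3 : -l ≤ |l| := neg_le_abs l
  have h4 : -l/(d*y) ≤ |l|/(d*y) := (div_le_div_iff_of_pos_right (by positivity)).2 h3
  have h5 : -(l/(d*y)) = -l/(d*y) := by ring
  linarith [h0, h1.le, h1.ge]

lemma ratio_lower (u y l d δc : ℝ) (hd : 0 < d) (hy : 0 < y) (hδ : 0 < δc)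
    (hK : 4*|l| ≤ d*δc*y) (hu : (y - l)/d ≤ u) : 1/d - δc/4 ≤ u/y := by
  have h0 : ((y-l)/d)/y ≤ u/y := (div_le_div_iff_of_pos_right hy).2 hu
  have h1 : ((y-l)/d)/y = 1/d - l/(d*y) := by field_simp
  have h2 : |l|/(d*y) ≤ δc/4 := by
    rw [div_le_iff₀ (by positivity)]; nlinarith
  have h3 : l ≤ |l| := le_abs_self l
  have h4 : l/(d*y) ≤ |l|/(d*y) := (div_le_div_iff_of_pos_right (by positivity)).2 h3
  linarith [h0, h1.le, h1.ge]

lemma eps_choice (p δ : ℝ) (hp : 1 < p) (hδ : 0 < δ) :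
    ∃ ε : ℝ, 0 < ε ∧ ε < 1 ∧ ε < (p-1)/2 ∧
      1/((p-1)/2 - ε) ≤ 2/(p-1) + δ/2 ∧ 2/(p-1) - δ/2 ≤ 1/((p-1)/2 + ε) := by
  have hp1 : (0:ℝ) < p - 1 := by linarith
  refine ⟨min (min ((p-1)/8) (1/2)) (δ*(p-1)^2/32), ?_, ?_, ?_, ?_, ?_⟩
  · apply lt_min (lt_min (by positivity) (by norm_num)) (by positivity)
  · calc min (min ((p-1)/8) (1/2)) (δ*(p-1)^2/32) ≤ 1/2 :=
        le_trans (min_le_left _ _) (min_le_right _ _)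
      _ < 1 := by norm_num
  · calc min (min ((p-1)/8) (1/2)) (δ*(p-1)^2/32) ≤ (p-1)/8 :=
        le_trans (min_le_left _ _) (min_le_left _ _)
      _ < (p-1)/2 := by linarith
  · set ε := min (min ((p-1)/8) (1/2)) (δ*(p-1)^2/32) with hεd
    have hε0 : 0 < ε := lt_min (lt_min (by positivity) (by norm_num)) (by positivity)
    have hε8 : ε ≤ (p-1)/8 := le_trans (min_le_left _ _) (min_le_left _ _)
    have hεδ : ε ≤ δ*(p-1)^2/32 := min_le_right _ _
    have hd1 : (0:ℝ) < (p-1)/2 - ε := by linarith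
    rw [div_le_iff₀ hd1]
    set c : ℝ := 2/(p-1) with hcd
    have hc : c * (p-1) = 2 := by rw [hcd]; field_simp
    have hcpos : 0 < c := by positivity
    have hce : c * ε ≤ δ*(p-1)/16 := by
      have h1 : c * ε ≤ c * (δ*(p-1)^2/32) := mul_le_mul_of_nonneg_left hεδ (le_of_lt hcpos)
      have h2 : c * (δ*(p-1)^2/32) = (c*(p-1))*(δ*(p-1))/32 := by ring
      rw [h2, hc] at h1
      linarith
    have hexp : (c+δ/2)*((p-1)/2-ε) = (c*(p-1))/2 - c*ε + δ/2*((p-1)/2-ε) := by ring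
    have h7 : δ/2*(3*(p-1)/8) ≤ δ/2*((p-1)/2-ε) :=
      mul_le_mul_of_nonneg_left (by linarith) (by linarith)
    nlinarith
  · set ε := min (min ((p-1)/8) (1/2)) (δ*(p-1)^2/32) with hεd
    have hε0 : 0 < ε := lt_min (lt_min (by positivity) (by norm_num)) (by positivity)
    have hεδ : ε ≤ δ*(p-1)^2/32 := min_le_right _ _
    have hd2 : (0:ℝ) < (p-1)/2 + ε := by linarith
    rcases le_or_gt (2/(p-1) - δ/2) 0 with h | h
    · exact le_trans h (le_of_lt (by positivity))
    · rw [le_div_iff₀ hd2]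
      set c : ℝ := 2/(p-1) with hcd
      have hc : c * (p-1) = 2 := by rw [hcd]; field_simp
      have hcpos : 0 < c := by positivity
      have hce : c * ε ≤ δ*(p-1)/16 := by
        have h1 : c * ε ≤ c * (δ*(p-1)^2/32) := mul_le_mul_of_nonneg_left hεδ (le_of_lt hcpos)
        have h2 : c * (δ*(p-1)^2/32) = (c*(p-1))*(δ*(p-1))/32 := by ring
        rw [h2, hc] at h1
        linarith
      have hexp : (c-δ/2)*((p-1)/2+ε) = (c*(p-1))/2 + c*ε - δ/2*((p-1)/2+ε) := by ring
      have h8 : δ/2*((p-1)/2) ≤ δ/2*((p-1)/2+ε) :=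
        mul_le_mul_of_nonneg_left (by linarith) (by linarith)
      nlinarith

set_option maxHeartbeats 2000000 in
theorem stmt12 (p a A B T : ℝ) (hp : 1 < p) (hA : 0 < A) (hB : 0 < B) (hT : 0 < T)
    (v : ℝ → ℝ) (hv0 : v 0 = A) (hv0' : deriv v 0 = B)
    (hpos : ∀ t ∈ Ico (0:ℝ) T, 0 < v t)
    (hv : ∀ t ∈ Ico (0:ℝ) T, HasDerivAt v (deriv v t) t)
    (hv' : ∀ t ∈ Ico (0:ℝ) T,
      HasDerivAt (deriv v) (|v t| ^ (p - 1) * v t * (Real.log (2 + (v t) ^ 2)) ^ a) t)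
    (hblow : Tendsto v (nhdsWithin T (Iio T)) atTop) :
    Tendsto (fun t : ℝ =>
        Real.log ((v t) ^ 2 + 2) / (-(4 / (p - 1)) * Real.log (T - t)))
      (nhdsWithin T (Iio T)) (nhds 1) := by
  have hp1 : (0:ℝ) < p - 1 := by linarith
  have hvfn : ∀ t ∈ Ico (0:ℝ) T, HasDerivAt (deriv v) (fn p a (v t)) t := by
    intro t ht; simpa [fn] using hv' t ht
  have hen := energy p a A B T hp v hv0 hv0' hv hvfn
  have hdg := deriv_ge p a B T hB v hv0' hpos hvfn
  have hsub : Tendsto (fun t => T - t) (nhdsWithin T (Iio T)) (nhdsWithin 0 (Ioi 0)) := by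
    apply tendsto_nhdsWithin_of_tendsto_nhds_of_eventually_within
    · have h1 : Tendsto (fun t : ℝ => T - t) (nhds T) (nhds (T - T)) :=
        tendsto_const_nhds.sub tendsto_id
      rw [sub_self] at h1
      exact h1.mono_left nhdsWithin_le_nhds
    · filter_upwards [self_mem_nhdsWithin] with t ht
      exact sub_pos.2 (mem_Iio.1 ht)
  have hy : Tendsto (fun t => -Real.log (T - t)) (nhdsWithin T (Iio T)) atTop := by
    have h1 : Tendsto (fun t => Real.log (T - t)) (nhdsWithin T (Iio T)) atBot :=
      Real.tendsto_log_nhdsGT_zero.comp hsub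
    exact tendsto_neg_atBot_atTop.comp h1
  -- main ratio limit
  have main : Tendsto (fun t => Real.log (v t) / (-Real.log (T - t)))
      (nhdsWithin T (Iio T)) (nhds (2/(p-1))) := by
    apply tendsto_of_eventually_abs_le
    intro δ hδ
    obtain ⟨ε, hε0, hε1, hεp, hchoice1, hchoice2⟩ := eps_choice p δ hp hδ
    set q1 : ℝ := (p+1)/2 - ε with hq1d
    set q2 : ℝ := (p+1)/2 + ε with hq2d
    have hq1 : 1 < q1 := by rw [hq1d]; linarith
    have hq2 : 1 < q2 := by rw [hq2d]; linarith
    have hq1e : q1 - 1 = (p-1)/2 - ε := by rw [hq1d]; ring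
    have hq2e : q2 - 1 = (p-1)/2 + ε := by rw [hq2d]; ring
    have hFb := Fi_bounds p a A B ε hp hA hε0 hε1
    have hev : ∀ᶠ t in nhdsWithin T (Iio T),
        v t ^ q1 ≤ deriv v t ∧ deriv v t ≤ v t ^ q2 := by
      have hmax : max 0 (T-1) < T := max_lt hT (by linarith)
      have hmem : Ioo (max 0 (T-1)) T ∈ nhdsWithin T (Iio T) :=
        Ioo_mem_nhdsLT_of_mem ⟨hmax, le_refl T⟩
      filter_upwards [hblow.eventually hFb, hmem] with t hF ht
      have htI : t ∈ Ico (0:ℝ) T := ⟨le_trans (le_max_left 0 (T-1)) (le_of_lt ht.1), ht.2⟩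
      have hvt : 0 < v t := hpos t htI
      have hdv : 0 ≤ deriv v t := le_trans (le_of_lt hB) (hdg t htI)
      have hsq := hen t htI
      constructor
      · have e : (v t ^ q1)^2 = v t ^ (p+1-2*ε) := by
          rw [sq, ← Real.rpow_add hvt]; congr 1; rw [hq1d]; ring
        calc v t ^ q1 = Real.sqrt ((v t ^ q1)^2) :=
              (Real.sqrt_sq (Real.rpow_nonneg (le_of_lt hvt) _)).symm
          _ ≤ Real.sqrt ((deriv v t)^2) := Real.sqrt_le_sqrt (by rw [e, hsq]; exact hF.1)
          _ = deriv v t := Real.sqrt_sq hdv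
      · have e : (v t ^ q2)^2 = v t ^ (p+1+2*ε) := by
          rw [sq, ← Real.rpow_add hvt]; congr 1; rw [hq2d]; ring
        calc deriv v t = Real.sqrt ((deriv v t)^2) := (Real.sqrt_sq hdv).symm
          _ ≤ Real.sqrt ((v t ^ q2)^2) := Real.sqrt_le_sqrt (by rw [e, hsq]; exact hF.2)
          _ = v t ^ q2 := Real.sqrt_sq (Real.rpow_nonneg (le_of_lt hvt) _)
    rcases (mem_nhdsLT_iff_exists_Ioo_subset).1 hev with ⟨l, hl, hsubs⟩
    have hlT : l < T := hl
    set t0 : ℝ := max ((l+T)/2) 0 with ht0d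
    have ht0T : t0 < T := max_lt (by linarith) hT
    have ht00 : 0 ≤ t0 := le_max_right _ _
    have ht0l : l < t0 := lt_of_lt_of_le (by linarith) (le_max_left _ _)
    have hIsub : Ico t0 T ⊆ Ico (0:ℝ) T := fun x hx => ⟨le_trans ht00 hx.1, hx.2⟩
    have hIsub2 : Ico t0 T ⊆ Ioo l T := fun x hx => ⟨lt_of_lt_of_le ht0l hx.1, hx.2⟩
    have hpos' : ∀ t ∈ Ico t0 T, 0 < v t := fun t ht => hpos t (hIsub ht)
    have hv2 : ∀ t ∈ Ico t0 T, HasDerivAt v (deriv v t) t := fun t ht => hv t (hIsub ht)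
    have hdlo : ∀ t ∈ Ico t0 T, v t ^ q1 ≤ deriv v t := fun t ht => (hsubs (hIsub2 ht)).1
    have hdhi : ∀ t ∈ Ico t0 T, deriv v t ≤ v t ^ q2 := fun t ht => (hsubs (hIsub2 ht)).2
    have hO1 := ode_low T t0 q1 hq1 ht0T v hpos' hv2 hblow hdlo
    have hO2 := ode_high T t0 q2 hq2 ht0T v hpos' hv2 hblow hdhi
    set l1 := Real.log (q1 - 1) with hl1d
    set l2 := Real.log (q2 - 1) with hl2d
    have hq1p : 0 < q1 - 1 := by linarith
    have hq2p : 0 < q2 - 1 := by linarith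
    filter_upwards [mem_of_superset (Ioo_mem_nhdsLT_of_mem ⟨ht0T, le_refl T⟩) Ioo_subset_Ico_self,
        hy.eventually_ge_atTop (4*|l1|/((q1-1)*δ)),
        hy.eventually_ge_atTop (4*|l2|/((q2-1)*δ)),
        hy.eventually_gt_atTop 0,
        self_mem_nhdsWithin] with t htI hK1 hK2 hy0 htT
    have hTt : 0 < T - t := sub_pos.2 htT
    have hvt : 0 < v t := hpos' t htI
    have hb1 := hO1 t htI
    have hb2 := hO2 t htI
    set y := -Real.log (T - t) with hyd
    have hyl : Real.log (T - t) = -y := by rw [hyd]; ring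
    have hlog1 : Real.log (v t) ≤ (y - l1)/(q1-1) := by
      have h1 : Real.log ((q1-1)*(T-t)) ≤ Real.log (v t ^ (1-q1)) :=
        Real.log_le_log (by positivity) hb1
      rw [Real.log_rpow hvt, Real.log_mul (ne_of_gt hq1p) (ne_of_gt hTt), hyl, ← hl1d] at h1
      rw [le_div_iff₀ hq1p]
      nlinarith
    have hlog2 : (y - l2)/(q2-1) ≤ Real.log (v t) := by
      have h1 : Real.log (v t ^ (1-q2)) ≤ Real.log ((q2-1)*(T-t)) :=
        Real.log_le_log (Real.rpow_pos_of_pos hvt _) hb2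
      rw [Real.log_rpow hvt, Real.log_mul (ne_of_gt hq2p) (ne_of_gt hTt), hyl, ← hl2d] at h1
      rw [div_le_iff₀ hq2p]
      nlinarith
    have hK1' : 4*|l1| ≤ (q1-1)*δ*y := by
      rw [div_le_iff₀ (by positivity)] at hK1
      linarith
    have hK2' : 4*|l2| ≤ (q2-1)*δ*y := by
      rw [div_le_iff₀ (by positivity)] at hK2
      linarith
    have hr1 := ratio_upper (Real.log (v t)) y l1 (q1-1) δ hq1p hy0 hδ hK1' hlog1
    have hr2 := ratio_lower (Real.log (v t)) y l2 (q2-1) δ hq2p hy0 hδ hK2' hlog2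
    rw [hq1e] at hr1
    rw [hq2e] at hr2
    rw [abs_le]
    constructor
    · have := hchoice2
      simp only [hyd] at hr2 ⊢
      linarith
    · have := hchoice1
      simp only [hyd] at hr1 ⊢
      linarith
  -- secondary limit: the log(1 + 2/v^2) part
  have hE0 : Tendsto (fun t => Real.log (1 + 2/(v t)^2) / (-Real.log (T - t)))
      (nhdsWithin T (Iio T)) (nhds 0) := by
    have h2y : Tendsto (fun t => 2 / (-Real.log (T - t))) (nhdsWithin T (Iio T)) (nhds 0) :=
      tendsto_const_nhds.div_atTop hy
    apply squeeze_zero' (t₀ := nhdsWithin T (Iio T))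
    · filter_upwards [hblow.eventually_ge_atTop 1, hy.eventually_gt_atTop 0] with t h1 h2
      have hvt : (0:ℝ) < v t := lt_of_lt_of_le one_pos h1
      have h3 : (0:ℝ) ≤ Real.log (1 + 2/(v t)^2) := Real.log_nonneg (by nlinarith [sq_nonneg (v t), pow_pos hvt 2, div_nonneg (by norm_num : (0:ℝ) ≤ 2) (le_of_lt (pow_pos hvt 2))])
      exact div_nonneg h3 (le_of_lt h2)
    · filter_upwards [hblow.eventually_ge_atTop 1, hy.eventually_gt_atTop 0] with t h1 h2
      have hvt : (0:ℝ) < v t := lt_of_lt_of_le one_pos h1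
      have hle : Real.log (1 + 2/(v t)^2) ≤ 2 := by
        have h3 : (1:ℝ) + 2/(v t)^2 ≤ 3 := by
          have : 2/(v t)^2 ≤ 2 := by
            rw [div_le_iff₀ (by positivity)]
            nlinarith
          linarith
        calc Real.log (1 + 2/(v t)^2) ≤ Real.log 3 := Real.log_le_log (by positivity) h3
          _ ≤ 3 - 1 := Real.log_le_sub_one_of_pos (by norm_num)
          _ = 2 := by norm_num
      exact (div_le_div_iff_of_pos_right h2).2 hle
    · exact h2y
  -- combine
  have hG : Tendsto (fun t => (2*(Real.log (v t) / (-Real.log (T-t)))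
      + Real.log (1 + 2/(v t)^2) / (-Real.log (T - t))) * ((p-1)/4))
      (nhdsWithin T (Iio T)) (nhds ((2*(2/(p-1)) + 0) * ((p-1)/4))) :=
    (((main.const_mul 2).add hE0).mul_const _)
  have hone : (2*(2/(p-1)) + 0) * ((p-1)/4) = 1 := by field_simp; norm_num
  rw [hone] at hG
  apply hG.congr'
  filter_upwards [hblow.eventually_ge_atTop 1, hy.eventually_gt_atTop 0,
      self_mem_nhdsWithin] with t h1 h2 htT
  have hvt : (0:ℝ) < v t := lt_of_lt_of_le one_pos h1
  have hTt : 0 < T - t := sub_pos.2 htT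
  have hyne : -Real.log (T - t) ≠ 0 := ne_of_gt h2
  have hsplit : Real.log ((v t)^2 + 2) = 2*Real.log (v t) + Real.log (1 + 2/(v t)^2) := by
    have he : (v t)^2 + 2 = (v t)^2 * (1 + 2/(v t)^2) := by field_simp
    rw [he, Real.log_mul (by positivity) (by positivity), Real.log_pow]
    push_cast; ring
  rw [hsplit]
  have hpe : (p:ℝ) - 1 ≠ 0 := ne_of_gt hp1
  have hl0 : Real.log (T - t) ≠ 0 := fun h => hyne (by rw [h]; ring)
  field_simp
  ring
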